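/- The theta function of a coset of A₆ in its dual lattice depends only on the norm of the coset modulo 2: if r, s ∈ A₆* satisfy r² − s² ∈ 2ℤ, then for every complex number w with |w| < 1, ∑_{x ∈ r+A₆} w^{7x²} = ∑_{x ∈ s+A₆} w^{7x²} (both series converge absolutely, and 7x² ∈ ℤ for x in a coset of A₆ in A₆*). -/

import Mathlib

def A6 : Type := {v : Fin 7 → ℤ // ∑ i, v i = 0}

lemma sumpow_int {q : ℝ} (h0 : 0 ≤ q) (h1 : q < 1) :
    Summable (fun m : ℤ => q ^ m.natAbs) := by
  apply Summable.of_nat_of_neg <;> simpa using summable_geometric_of_lt_one h0 h1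

lemma sumpow_pi {q : ℝ} (h0 : 0 ≤ q) (h1 : q < 1) (n : ℕ) :
    Summable (fun v : Fin n → ℤ => q ^ (∑ i, (v i).natAbs)) := by
  induction n with
  | zero => exact .of_finite
  | succ n ih =>
    have h := (sumpow_int h0 h1).mul_of_nonneg ih
      (fun m => pow_nonneg h0 _) (fun v => pow_nonneg h0 _)
    have h2 := (Fin.consEquiv fun _ : Fin (n+1) => ℤ).symm.summable_iff.mpr h
    refine h2.congr fun v => ?_
    simp [Fin.consEquiv, Fin.sum_univ_succ, pow_add, Function.comp, Fin.tail]

lemma summable_theta (w : ℂ) (hw : ‖w‖ < 1) (r : Fin 7 → ℚ) (N : A6 → ℕ)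
    (hN : ∀ v : A6, (N v : ℚ) = 7 * ∑ i, (r i + (v.1 i : ℚ)) ^ 2) :
    Summable (fun v : A6 => w ^ N v) := by
  set q : ℝ := (‖w‖ + 1) / 2 with hq
  have hn := norm_nonneg w
  have hq0 : 0 < q := by positivity
  have hq1 : q < 1 := by rw [hq]; linarith
  have hwq : ‖w‖ ≤ q := by rw [hq]; linarith
  set C : ℕ := ⌈∑ i, (|r i| + 1)⌉₊ with hC
  have key : ∀ v : A6, (∑ i, (v.1 i).natAbs) ≤ N v + C := by
    intro v
    have h1 : ((∑ i, (v.1 i).natAbs : ℕ) : ℚ) ≤ ((N v : ℚ)) + C := by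
      push_cast [Nat.cast_natAbs, Int.cast_abs]
      have hterm : ∀ i ∈ Finset.univ, |((v.1 i : ℤ) : ℚ)| ≤ 7 * (r i + v.1 i)^2 + (|r i| + 1) := by
        intro i _
        have h2 : |((v.1 i : ℤ):ℚ)| ≤ |r i + (v.1 i:ℚ)| + |r i| := by
          have := abs_sub (r i + (v.1 i:ℚ)) (r i)
          simpa using this
        have h3 : |r i + ((v.1 i:ℤ):ℚ)| ≤ 7*(r i + (v.1 i:ℚ))^2 + 1 := by
          rcases abs_cases (r i + ((v.1 i:ℤ):ℚ)) with ⟨h,_⟩|⟨h,_⟩ <;> rw [h] <;>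
            nlinarith [sq_nonneg (r i + ((v.1 i:ℤ):ℚ) - 1), sq_nonneg (r i + ((v.1 i:ℤ):ℚ) + 1)]
        linarith
      calc (∑ i, |((v.1 i : ℤ):ℚ)|) ≤ ∑ i, (7*(r i + (v.1 i:ℚ))^2 + (|r i|+1)) :=
            Finset.sum_le_sum hterm
        _ = (N v : ℚ) + ∑ i, (|r i|+1) := by
            rw [hN v, Finset.sum_add_distrib, Finset.mul_sum]
        _ ≤ (N v:ℚ) + C := by
            have := Nat.le_ceil (∑ i, (|r i| + 1))
            exact add_le_add_right this _
    exact_mod_cast h1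
  have hsumA : Summable (fun v : A6 => q ^ (∑ i, (v.1 i).natAbs)) := by
    have hinj : Function.Injective (fun v : A6 => v.1) := fun a b h => Subtype.ext h
    exact (sumpow_pi hq0.le hq1 7).comp_injective hinj
  apply Summable.of_norm_bounded (hsumA.mul_left ((q^C)⁻¹))
  intro v
  rw [norm_pow]
  calc ‖w‖ ^ N v ≤ q ^ N v := pow_le_pow_left₀ hn hwq _
    _ ≤ (q^C)⁻¹ * q ^ (∑ i, (v.1 i).natAbs) := by
        rw [inv_mul_eq_div, le_div_iff₀ (by positivity), ← pow_add]
        exact pow_le_pow_of_le_one hq0.le hq1.le (key v)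

lemma coset_rel (r s : Fin 7 → ℚ)
    (hrspan : ∑ i, r i = 0) (hsspan : ∑ i, s i = 0)
    (hrdual : ∀ v : A6, ∃ k : ℤ, ∑ i, r i * (v.1 i : ℚ) = k)
    (hsdual : ∀ v : A6, ∃ k : ℤ, ∑ i, s i * (v.1 i : ℚ) = k)
    (hmod : ∃ k : ℤ, (∑ i, r i ^ 2) - (∑ i, s i ^ 2) = 2 * k) :
    ∃ (ε : ℤ) (u : Fin 7 → ℤ), (ε = 1 ∨ ε = -1) ∧ (∑ i, u i = 0) ∧
      (∀ i, s i = (ε : ℚ) * r i + (u i : ℚ)) := by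
  have hb : ∀ i : Fin 7, ∑ j, ((fun k => (if k = i then (1:ℤ) else 0) - (if k = 0 then 1 else 0)) j) = 0 := by
    intro i; simp [Finset.sum_sub_distrib]
  have hcr : ∀ i : Fin 7, ∃ k : ℤ, r i - r 0 = (k : ℚ) := by
    intro i
    obtain ⟨k, hk⟩ := hrdual ⟨_, hb i⟩
    refine ⟨k, ?_⟩
    rw [← hk]
    simp [mul_sub, Finset.sum_sub_distrib, mul_ite, Finset.sum_ite_eq']
  have hcs : ∀ i : Fin 7, ∃ k : ℤ, s i - s 0 = (k : ℚ) := by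
    intro i
    obtain ⟨k, hk⟩ := hsdual ⟨_, hb i⟩
    refine ⟨k, ?_⟩
    rw [← hk]
    simp [mul_sub, Finset.sum_sub_distrib, mul_ite, Finset.sum_ite_eq']
  choose c hc using hcr
  choose d hd using hcs
  have hc0 : c 0 = 0 := by have := hc 0; simp at this; exact_mod_cast this.symm
  have hd0 : d 0 = 0 := by have := hd 0; simp at this; exact_mod_cast this.symm
  have hri : ∀ i, r i = r 0 + (c i : ℚ) := fun i => by linarith [hc i]
  have hsi : ∀ i, s i = s 0 + (d i : ℚ) := fun i => by linarith [hd i]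
  set Ca : ℤ := ∑ i, c i with hCa
  set Da : ℤ := ∑ i, d i with hDa
  have h7r : 7 * r 0 + (Ca : ℚ) = 0 := by
    have h := hrspan
    simp only [Fin.sum_univ_seven] at h
    push_cast [hCa, Fin.sum_univ_seven, hc0]
    linarith [hc 0, hc 1, hc 2, hc 3, hc 4, hc 5, hc 6]
  have h7s : 7 * s 0 + (Da : ℚ) = 0 := by
    have h := hsspan
    simp only [Fin.sum_univ_seven] at h
    push_cast [hDa, Fin.sum_univ_seven, hd0]
    linarith [hd 0, hd 1, hd 2, hd 3, hd 4, hd 5, hd 6]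
  obtain ⟨k, hk⟩ := hmod
  have hdvd : (7:ℤ) ∣ (Da - Ca) * (Da + Ca) := by
    refine ⟨2*k - ∑ i, (c i)^2 + ∑ i, (d i)^2, ?_⟩
    have key : ((Da - Ca) * (Da + Ca) : ℚ) = 7 * ((2*(k:ℚ) - ∑ i, (c i:ℚ)^2 + ∑ i, (d i:ℚ)^2)) := by
      simp only [Fin.sum_univ_seven] at hk
      rw [hri 1, hri 2, hri 3, hri 4, hri 5, hri 6,
          hsi 1, hsi 2, hsi 3, hsi 4, hsi 5, hsi 6] at hk
      push_cast [hCa, hDa, Fin.sum_univ_seven, hc0, hd0] at h7r h7s ⊢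
      linear_combination 7 * hk - (7 * r 0 + ((c 1:ℚ)+c 2+c 3+c 4+c 5+c 6)) * h7r
        + (7 * s 0 + ((d 1:ℚ)+d 2+d 3+d 4+d 5+d 6)) * h7s
    push_cast at key
    exact_mod_cast key
  have h7p : Prime (7:ℤ) := by norm_num
  obtain ⟨ε, hε, t, ht⟩ : ∃ ε : ℤ, (ε = 1 ∨ ε = -1) ∧ ∃ t : ℤ, Da - ε * Ca = 7 * t := by
    rcases h7p.dvd_mul.mp hdvd with ⟨t, ht⟩ | ⟨t, ht⟩
    · exact ⟨1, Or.inl rfl, t, by linarith⟩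
    · exact ⟨-1, Or.inr rfl, t, by linarith⟩
  refine ⟨ε, fun i => d i - ε * c i - t, hε, ?_, ?_⟩
  · rw [Finset.sum_sub_distrib, Finset.sum_sub_distrib, ← Finset.mul_sum, ← hCa, ← hDa]
    simp only [Finset.sum_const, Finset.card_univ, Fintype.card_fin, nsmul_eq_mul, Nat.cast_ofNat]
    linarith [ht]
  · intro i
    have h1 := hri i
    have h2 := hsi i
    have ht' : (Da : ℚ) - (ε:ℚ) * (Ca:ℚ) = 7 * (t:ℚ) := by exact_mod_cast ht
    rcases hε with rfl | rfl <;> push_cast at ht' ⊢ <;> linarith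

/-- the theta function of a coset of `A₆` in its dual lattice depends
only on the norm of the coset modulo 2.  Here `r, s` are elements of the dual
lattice `A₆*` (they lie in the `ℚ`-span of `A₆` and pair integrally with the
lattice) with `r² − s² ∈ 2ℤ`, and `Nr v`, `Ns v` are the integers `7·(r+v)²`,
`7·(s+v)²` for `v ∈ A₆`.  Then for `|w| < 1` both theta series converge
absolutely and `∑_{x ∈ r+A₆} w^{7x²} = ∑_{x ∈ s+A₆} w^{7x²}`. -/
theorem theta_A6_coset_norm_mod_two (r s : Fin 7 → ℚ)
    (hrspan : ∑ i, r i = 0) (hsspan : ∑ i, s i = 0)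
    (hrdual : ∀ v : A6, ∃ k : ℤ, ∑ i, r i * (v.1 i : ℚ) = k)
    (hsdual : ∀ v : A6, ∃ k : ℤ, ∑ i, s i * (v.1 i : ℚ) = k)
    (hmod : ∃ k : ℤ, (∑ i, r i ^ 2) - (∑ i, s i ^ 2) = 2 * k)
    (Nr : A6 → ℕ) (hNr : ∀ v : A6, (Nr v : ℚ) = 7 * ∑ i, (r i + (v.1 i : ℚ)) ^ 2)
    (Ns : A6 → ℕ) (hNs : ∀ v : A6, (Ns v : ℚ) = 7 * ∑ i, (s i + (v.1 i : ℚ)) ^ 2)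
    (w : ℂ) (hw : ‖w‖ < 1) :
    Summable (fun v : A6 => w ^ Nr v) ∧
    Summable (fun v : A6 => w ^ Ns v) ∧
    (∑' v : A6, w ^ Nr v) = (∑' v : A6, w ^ Ns v) := by
  refine ⟨summable_theta w hw r Nr hNr, summable_theta w hw s Ns hNs, ?_⟩
  obtain ⟨ε, u, hε, hu, hs⟩ := coset_rel r s hrspan hsspan hrdual hsdual hmod
  have hε2 : ε * ε = 1 := by rcases hε with rfl | rfl <;> ring
  have hε2q : (ε:ℚ) * (ε:ℚ) = 1 := by exact_mod_cast hε2
  have hsum : ∀ x : Fin 7 → ℤ, (∑ i, x i = 0) → ∑ i, (ε * x i - u i) = 0 := by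
    intro x hx
    rw [Finset.sum_sub_distrib, ← Finset.mul_sum, hx, hu]; ring
  have hsum' : ∀ x : Fin 7 → ℤ, (∑ i, x i = 0) → ∑ i, (ε * (x i + u i)) = 0 := by
    intro x hx
    rw [← Finset.mul_sum, Finset.sum_add_distrib, hx, hu]; ring
  let e : A6 ≃ A6 :=
    { toFun := fun v => ⟨fun i => ε * v.1 i - u i, hsum v.1 v.2⟩
      invFun := fun x => ⟨fun i => ε * (x.1 i + u i), hsum' x.1 x.2⟩
      left_inv := by
        intro v
        apply Subtype.ext
        funext i
        show ε * (ε * v.1 i - u i + u i) = v.1 i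
        calc ε * (ε * v.1 i - u i + u i) = (ε * ε) * v.1 i := by ring
          _ = v.1 i := by rw [hε2]; ring
      right_inv := by
        intro x
        apply Subtype.ext
        funext i
        show ε * (ε * (x.1 i + u i)) - u i = x.1 i
        calc ε * (ε * (x.1 i + u i)) - u i = (ε * ε) * x.1 i + ((ε * ε) - 1) * u i := by ring
          _ = x.1 i := by rw [hε2]; ring }
  have hNrNs : ∀ v : A6, Nr v = Ns (e v) := by
    intro v
    have : (Nr v : ℚ) = (Ns (e v) : ℚ) := by
      rw [hNr, hNs]
      congr 1
      apply Finset.sum_congr rfl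
      intro i _
      have he : ((e v).1 i : ℚ) = (ε:ℚ) * (v.1 i : ℚ) - (u i : ℚ) := by
        show ((ε * v.1 i - u i : ℤ) : ℚ) = _
        push_cast; ring
      rw [he, hs i]
      linear_combination (-(r i + (v.1 i:ℚ))^2) * hε2q
    exact_mod_cast this
  calc (∑' v : A6, w ^ Nr v) = ∑' v : A6, w ^ Ns (e v) := by
        exact tsum_congr fun v => by rw [hNrNs v]
    _ = ∑' v : A6, w ^ Ns v := e.tsum_eq fun v => w ^ Ns v
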